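/- Let 1 → ⟨z⟩ → Γ̃ → Γ → 1 be a central extension with ⟨z⟩ ≅ ℤ, and suppose some power z^m lies in the derived subgroup Δ̃ of Γ̃ modulo [Δ̃,Γ̃] (i.e., the image of z in the abelianization of Γ̃ has finite order m ≥ 1). Let N = Γ/[Δ,Γ] and Ñ = Γ̃/[Δ̃,Γ̃] be the maximal two-step nilpotent quotients, where Δ, Δ̃ are derived subgroups. Then Ñ/⟨ẑ⟩ ≅ N, where ẑ is the image of z in Ñ, and the free ranks of the abelian groups Δ̃/[Δ̃,Γ̃] and Δ/[Δ,Γ] differ by ε ∈ {0,1}, with ε = 1 if and only if ẑ has infinite order in Ñ. -/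

import Mathlib

open scoped TensorProduct DirectSum commutatorElement
open Subgroup

noncomputable instance : Module.Flat ℤ ℚ := IsLocalization.flat ℚ (nonZeroDivisors ℤ)


/-- free rank of an abelian group -/
noncomputable def arank (M : Type*) [AddCommGroup M] : ℕ :=
  Module.finrank ℚ (ℚ ⊗[ℤ] M)

lemma finrank_eq_of_addEquiv {V W : Type*} [AddCommGroup V] [AddCommGroup W]
    [Module ℚ V] [Module ℚ W] (e : V ≃+ W) :
    Module.finrank ℚ V = Module.finrank ℚ W :=
  (e.toLinearEquiv (map_rat_smul e)).finrank_eq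

lemma arank_congr {M N : Type*} [AddCommGroup M] [AddCommGroup N] (e : M ≃+ N) :
    arank M = arank N :=
  finrank_eq_of_addEquiv
    (TensorProduct.congr (LinearEquiv.refl ℤ ℚ) e.toIntLinearEquiv).toAddEquiv

lemma subsingleton_tensor_of_finite (M : Type*) [AddCommGroup M] [Finite M] :
    Subsingleton (ℚ ⊗[ℤ] M) := by
  refine subsingleton_of_forall_eq 0 fun x => ?_
  induction x using TensorProduct.induction_on with
  | zero => rfl
  | tmul q m =>
    have hm : IsOfFinAddOrder m := isOfFinAddOrder_of_finite m
    set n : ℕ := addOrderOf m with hn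
    have hnpos : 0 < n := hm.addOrderOf_pos
    have hsmul : (n : ℤ) • m = 0 := by
      rw [natCast_zsmul, addOrderOf_nsmul_eq_zero]
    have : q ⊗ₜ[ℤ] m = ((n : ℚ)⁻¹ * q) ⊗ₜ[ℤ] ((n : ℤ) • m) := by
      rw [TensorProduct.tmul_smul, TensorProduct.smul_tmul', zsmul_eq_mul]
      push_cast
      rw [← mul_assoc, mul_inv_cancel₀ (by exact_mod_cast hnpos.ne')]
      ring_nf
    rw [this, hsmul, TensorProduct.tmul_zero]
  | add x y hx hy => rw [hx, hy, add_zero]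

lemma arank_of_finite (M : Type*) [AddCommGroup M] [Finite M] : arank M = 0 := by
  have := subsingleton_tensor_of_finite M
  exact Module.finrank_zero_of_subsingleton

lemma arank_int : arank ℤ = 1 := by
  have e : (ℚ ⊗[ℤ] ℤ) ≃+ ℚ := (TensorProduct.rid ℤ ℚ).toAddEquiv
  unfold arank
  rw [finrank_eq_of_addEquiv e, Module.finrank_self]

lemma arank_finsupp_int (n : ℕ) : arank (Fin n →₀ ℤ) = n := by
  classical
  have e : (ℚ ⊗[ℤ] (Fin n →₀ ℤ)) ≃+ (Fin n →₀ ℚ) :=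
    (TensorProduct.finsuppScalarRight ℤ ℚ ℚ (Fin n)).toAddEquiv
  unfold arank
  rw [finrank_eq_of_addEquiv e, finrank_eq_of_addEquiv
    (Finsupp.linearEquivFunOnFinite ℚ ℚ (Fin n)).toAddEquiv]
  simp [Module.finrank_pi]

lemma arank_prod_finite (M T : Type*) [AddCommGroup M] [AddCommGroup T] [Finite T] :
    arank (M × T) = arank M := by
  have e1 : (ℚ ⊗[ℤ] (M × T)) ≃+ (ℚ ⊗[ℤ] M) × (ℚ ⊗[ℤ] T) :=
    (TensorProduct.prodRight ℤ ℚ ℚ M T).toAddEquiv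
  have := subsingleton_tensor_of_finite T
  have e2 : (ℚ ⊗[ℤ] M) × (ℚ ⊗[ℤ] T) ≃+ (ℚ ⊗[ℤ] M) :=
    { toFun := Prod.fst
      invFun := fun x => (x, 0)
      left_inv := fun x => Prod.ext rfl (Subsingleton.elim _ _)
      right_inv := fun x => rfl
      map_add' := fun x y => rfl }
  unfold arank
  rw [finrank_eq_of_addEquiv (e1.trans e2)]

lemma arank_add_of_surjective {A B : Type*} [AddCommGroup A] [AddCommGroup B]
    [AddGroup.FG A] (f : A →+ B) (hf : Function.Surjective f) :
    arank A = arank B + arank f.ker := by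
  have hfin : Module.Finite ℤ A := Module.Finite.iff_addGroup_fg.mpr ‹_›
  have : Module.Finite ℚ (ℚ ⊗[ℤ] A) := Module.Finite.base_change ℤ ℚ A
  set φ : A →ₗ[ℤ] B := f.toIntLinearMap with hφ
  set K : Submodule ℤ A := LinearMap.ker φ with hK
  set Φ : ℚ ⊗[ℤ] A →ₗ[ℚ] ℚ ⊗[ℤ] B := φ.baseChange ℚ with hΦ
  set I : ℚ ⊗[ℤ] K →ₗ[ℚ] ℚ ⊗[ℤ] A := K.subtype.baseChange ℚ with hI
  -- functions agree with lTensor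
  have hΦl : ⇑Φ = ⇑(LinearMap.lTensor ℚ φ) := by
    ext x; rfl
  have hIl : ⇑I = ⇑(LinearMap.lTensor ℚ K.subtype) := by
    ext x; rfl
  have hsurj : Function.Surjective Φ := by
    rw [hΦl]; exact LinearMap.lTensor_surjective ℚ hf
  have hinj : Function.Injective I := by
    rw [hIl]
    exact Module.Flat.lTensor_preserves_injective_linearMap K.subtype K.injective_subtype
  have hexact : Function.Exact I Φ := by
    rw [hΦl, hIl]
    exact Module.Flat.lTensor_exact ℚ (φ.exact_subtype_ker_map)
  have hker : LinearMap.ker Φ = LinearMap.range I := LinearMap.exact_iff.mp hexact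
  have h1 : Module.finrank ℚ (LinearMap.range Φ) + Module.finrank ℚ (LinearMap.ker Φ)
      = Module.finrank ℚ (ℚ ⊗[ℤ] A) := Φ.finrank_range_add_finrank_ker
  have h2 : LinearMap.range Φ = ⊤ := LinearMap.range_eq_top.mpr hsurj
  have h3 : Module.finrank ℚ (LinearMap.range I) = Module.finrank ℚ (ℚ ⊗[ℤ] K) :=
    (LinearEquiv.ofInjective I hinj).symm.finrank_eq
  have hKe : arank f.ker = arank K := by
    refine arank_congr ?_
    exact { toFun := fun x => ⟨x.1, x.2⟩
            invFun := fun x => ⟨x.1, x.2⟩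
            left_inv := fun x => rfl
            right_inv := fun x => rfl
            map_add' := fun x y => rfl }
  have : arank A = arank B + arank K := by
    unfold arank
    rw [← h1, h2, hker, h3, finrank_top]

  rw [this, hKe]

/-- A (necessarily virtually abelian) group `A` has free rank `r` if
`A ≅ ℤ^r × T` for a finite (abelian) group `T`. -/
def HasFreeRank (A : Type*) [Group A] (r : ℕ) : Prop :=
  ∃ (T : Type) (_ : CommGroup T) (_ : Fintype T),
    Nonempty (A ≃* (Multiplicative (Fin r → ℤ) × T))

lemma arank_eq_one_of_injective_int {K : Type*} [AddCommGroup K] (f : K →+ ℤ)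
    (hf : Function.Injective f) (k : K) (hk : k ≠ 0) : arank K = 1 := by
  obtain ⟨a, ha⟩ := Int.subgroup_cyclic f.range
  have hcl : (AddSubgroup.closure {a} : AddSubgroup ℤ) = AddSubgroup.zmultiples a :=
    (AddSubgroup.zmultiples_eq_closure a).symm
  have ha0 : a ≠ 0 := by
    rintro rfl
    have : f k ∈ f.range := ⟨k, rfl⟩
    rw [ha, hcl] at this
    obtain ⟨n, hn⟩ := this
    simp only [smul_zero] at hn
    exact hk (hf (by simpa using hn.symm))
  have e1 : K ≃+ f.range := AddMonoidHom.ofInjective hf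
  have e2 : ℤ ≃+ AddSubgroup.zmultiples a := by
    refine AddEquiv.ofBijective
      ((zmultiplesHom _ (⟨a, AddSubgroup.mem_zmultiples a⟩ : AddSubgroup.zmultiples a))) ⟨?_, ?_⟩
    · intro n m hnm
      have h1 : n • a = m • a := congrArg Subtype.val hnm
      have h2 : n * a = m * a := by simpa [zsmul_eq_mul] using h1
      exact mul_right_cancel₀ ha0 h2
    · rintro ⟨x, n, rfl⟩
      exact ⟨n, rfl⟩
  have := arank_congr e1
  rw [this, arank_congr (AddEquiv.addSubgroupCongr (ha.trans hcl)), ← arank_congr e2, arank_int]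

lemma hasFreeRank_arank (A : Type*) [CommGroup A] [Group.FG A] :
    HasFreeRank A (arank (Additive A)) := by
  obtain ⟨n, ι, fι, p, hp, e, ⟨F⟩⟩ :=
    AddCommGroup.equiv_free_prod_directSum_zmod (Additive A)
  haveI hzm : ∀ i, NeZero (p i ^ e i) := fun i => ⟨pow_ne_zero _ (hp i).pos.ne'⟩
  haveI : ∀ i, Fintype (ZMod (p i ^ e i)) := fun i => ZMod.fintype _
  haveI hfin : Finite (⨁ i, ZMod (p i ^ e i)) :=
    Finite.of_equiv _ (DirectSum.addEquivProd fun i => ZMod (p i ^ e i)).symm.toEquiv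
  have hrank : arank (Additive A) = n := by
    rw [arank_congr F, arank_prod_finite, arank_finsupp_int]
  rw [hrank]
  refine ⟨Multiplicative (⨁ i, ZMod (p i ^ e i)), inferInstance, Fintype.ofFinite _, ⟨?_⟩⟩
  have e0 : A ≃* Multiplicative (Additive A) := MulEquiv.multiplicativeAdditive A |>.symm
  have efs : (Fin n →₀ ℤ) ≃+ (Fin n → ℤ) :=
    (Finsupp.linearEquivFunOnFinite ℤ ℤ (Fin n)).toAddEquiv
  exact e0.trans <| (AddEquiv.toMultiplicative F).trans <|
    MulEquiv.trans (MulEquiv.prodMultiplicative _ _) <|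
      MulEquiv.prodCongr (AddEquiv.toMultiplicative efs) (MulEquiv.refl _)


open Subgroup

/-- A subgroup contained in the center is commutative. -/
@[reducible]
def commGroupOfLeCenter {G : Type*} [Group G] {H : Subgroup G}
    (h : H ≤ Subgroup.center G) : CommGroup H :=
  { (inferInstance : Group H) with
    mul_comm := fun a b => Subtype.ext <| by
      have := (Subgroup.mem_center_iff.mp (h a.2)) b
      simpa using this.symm }

lemma le_center_of_commutator_eq_bot {G : Type*} [Group G] {H : Subgroup G}
    (h : ⁅H, (⊤ : Subgroup G)⁆ = ⊥) : H ≤ Subgroup.center G := by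
  have := Subgroup.commutator_eq_bot_iff_le_centralizer.mp h
  rwa [Subgroup.coe_top, Subgroup.centralizer_univ] at this

lemma normal_of_le_center {G : Type*} [Group G] {H : Subgroup G}
    (h : H ≤ Subgroup.center G) : H.Normal := by
  constructor
  intro n hn g
  have : g * n = n * g := (Subgroup.mem_center_iff.mp (h hn)) g
  rw [this, mul_assoc, mul_inv_cancel, mul_one]
  exact hn

/-- In a group of nilpotency class ≤ 2, the commutator subgroup is generated by
commutators of generators; in particular it is finitely generated if the group is. -/
lemma commutator_fg_of_le_center (G : Type*) [Group G] [Group.FG G]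
    (h : commutator G ≤ Subgroup.center G) : (commutator G).FG := by
  obtain ⟨S, hScl, hSfin⟩ := Group.fg_iff.mp ‹_›
  set E : Set G := Set.image2 (fun a b => ⁅a, b⁆) S S with hE
  have hEfin : E.Finite := hSfin.image2 _ hSfin
  set H : Subgroup G := Subgroup.closure E with hH
  have hHle : H ≤ commutator G := by
    rw [hH, Subgroup.closure_le]
    rintro x ⟨a, ha, b, hb, rfl⟩
    exact Subgroup.commutator_mem_commutator (Subgroup.mem_top a) (Subgroup.mem_top b)
  haveI hHnorm : H.Normal := normal_of_le_center (hHle.trans h)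
  -- the quotient G/H is commutative
  have hcomm : ∀ x y : G ⧸ H, x * y = y * x := by
    have himg : Subgroup.closure ((QuotientGroup.mk' H) '' S) = ⊤ := by
      rw [← MonoidHom.map_closure, hScl, ← MonoidHom.range_eq_map,
        MonoidHom.range_eq_top]
      exact QuotientGroup.mk'_surjective H
    have hpair : ∀ x ∈ (QuotientGroup.mk' H) '' S, ∀ y ∈ (QuotientGroup.mk' H) '' S,
        x * y = y * x := by
      rintro x ⟨a, ha, rfl⟩ y ⟨b, hb, rfl⟩
      have : ((⁅a, b⁆ : G) : G ⧸ H) = 1 := by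
        rw [QuotientGroup.eq_one_iff]
        exact Subgroup.subset_closure (Set.mem_image2_of_mem ha hb)
      have h2 : ((⁅a, b⁆ : G) : G ⧸ H) = ⁅((a : G ⧸ H)), ((b : G ⧸ H))⁆ := rfl
      rw [h2] at this
      exact commutatorElement_eq_one_iff_mul_comm.mp this
    letI : CommGroup (Subgroup.closure ((QuotientGroup.mk' H) '' S)) :=
      Subgroup.closureCommGroupOfComm hpair
    intro x y
    have hx : x ∈ Subgroup.closure ((QuotientGroup.mk' H) '' S) := by rw [himg]; trivial
    have hy : y ∈ Subgroup.closure ((QuotientGroup.mk' H) '' S) := by rw [himg]; trivial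
    exact congrArg Subtype.val
      (mul_comm (⟨x, hx⟩ : Subgroup.closure ((QuotientGroup.mk' H) '' S)) ⟨y, hy⟩)
  -- hence commutator G ≤ H
  have hle : commutator G ≤ H := by
    rw [_root_.commutator, Subgroup.commutator_le]
    intro g₁ _ g₂ _
    rw [← QuotientGroup.eq_one_iff]
    have : ((⁅g₁, g₂⁆ : G) : G ⧸ H) = ⁅((g₁ : G ⧸ H)), ((g₂ : G ⧸ H))⁆ := rfl
    rw [this]
    exact commutatorElement_eq_one_iff_mul_comm.mpr (hcomm _ _)
  have : commutator G = H := le_antisymm hle hHle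
  rw [this, hH]
  exact (Subgroup.fg_iff H).mpr ⟨E, rfl, hEfin⟩

lemma mul_arank_eq_zero_of_finite (K : Type*) [CommGroup K] [Finite K] :
    arank (Additive K) = 0 := by
  haveI : Finite (Additive K) := Finite.of_equiv _ Additive.ofMul
  exact arank_of_finite _

lemma mul_arank_eq_one {K : Type*} [CommGroup K] (f : K →* Multiplicative ℤ)
    (hf : Function.Injective f) (k : K) (hk : k ≠ 1) : arank (Additive K) = 1 := by
  refine arank_eq_one_of_injective_int (MonoidHom.toAdditiveLeft f) ?_ (Additive.ofMul k) ?_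
  · intro x y hxy
    have : f (Additive.toMul x) = f (Additive.toMul y) :=
      Multiplicative.ofAdd.injective hxy
    exact Additive.toMul.injective (hf this)
  · simpa using hk

@[reducible]
def commGroupSubgroupOfComm {G : Type*} [Group G] (hG : ∀ x y : G, x * y = y * x)
    (H : Subgroup G) : CommGroup ↥H :=
  { (inferInstance : Group ↥H) with
    mul_comm := fun a b => Subtype.ext (hG a b) }

lemma map_commutator_surj {G G' : Type*} [Group G] [Group G'] (f : G →* G')
    (hf : Function.Surjective f) :
    Subgroup.map f (commutator G) = commutator G' := by
  rw [_root_.commutator_def G, _root_.commutator_def G', Subgroup.map_commutator,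
    Subgroup.map_top_of_surjective f hf]

/-- multiplicative version of rank additivity -/
lemma mul_arank_add {A B : Type*} [CommGroup A] [CommGroup B] [Group.FG A]
    (f : A →* B) (hf : Function.Surjective f) :
    arank (Additive A) = arank (Additive B) + arank (Additive ↥f.ker) := by
  have g : Additive A →+ Additive B := MonoidHom.toAdditive f
  have hg : Function.Surjective (MonoidHom.toAdditive f) := hf
  have he : arank (↥(MonoidHom.toAdditive f).ker) = arank (Additive ↥f.ker) :=
    arank_congr
    { toFun := fun x => Additive.ofMul (⟨Additive.toMul x.1, x.2⟩ : ↥f.ker)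
      invFun := fun y => ⟨Additive.ofMul ((Additive.toMul y : ↥f.ker) : A),
        (Additive.toMul y : ↥f.ker).2⟩
      left_inv := fun x => rfl
      right_inv := fun y => rfl
      map_add' := fun x y => rfl }
  rw [arank_add_of_surjective (MonoidHom.toAdditive f) hg, he]

/-- Let `1 → ⟨z⟩ → Γ̃ → Γ → 1` be a central extension of finitely generated groups
with `⟨z⟩ ≅ ℤ`, and suppose the image of `z` in the abelianization of `Γ̃` has
finite order `m ≥ 1`.  Let `Ñ = Γ̃/[Δ̃,Γ̃]` and `N = Γ/[Δ,Γ]` be the maximal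
two-step nilpotent quotients (with derived subgroups `Δ̃`, `Δ`), and let `ẑ` be
the image of `z` in `Ñ`.  Then `Ñ/⟨ẑ⟩ ≅ N`, and the free ranks of the abelian
groups `Δ̃/[Δ̃,Γ̃]` and `Δ/[Δ,Γ]` (realized as the commutator subgroups of `Ñ`
and `N`) differ by `ε ∈ {0,1}`, with `ε = 1` iff `ẑ` has infinite order in `Ñ`. -/
theorem rank_jump_of_central_extension (Γt Γ : Type*) [Group Γt] [Group Γ]
    [Group.FG Γt] [Group.FG Γ]
    (π : Γt →* Γ) (hπ : Function.Surjective π)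
    (z : Γt) (hz : z ∈ Subgroup.center Γt) (hzinf : ¬ IsOfFinOrder z)
    (hker : π.ker = Subgroup.zpowers z)
    (m : ℕ) (hm : 1 ≤ m) (hzm : orderOf (Abelianization.of z) = m) :
    Nonempty
      (((Γt ⧸ ⁅commutator Γt, (⊤ : Subgroup Γt)⁆) ⧸
          Subgroup.normalClosure
            {(QuotientGroup.mk' ⁅commutator Γt, (⊤ : Subgroup Γt)⁆) z}) ≃*
        (Γ ⧸ ⁅commutator Γ, (⊤ : Subgroup Γ)⁆)) ∧
    ∃ r ε : ℕ, ε ≤ 1 ∧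
      HasFreeRank ↥(commutator (Γ ⧸ ⁅commutator Γ, (⊤ : Subgroup Γ)⁆)) r ∧
      HasFreeRank ↥(commutator (Γt ⧸ ⁅commutator Γt, (⊤ : Subgroup Γt)⁆)) (r + ε) ∧
      (ε = 1 ↔
        ¬ IsOfFinOrder ((QuotientGroup.mk' ⁅commutator Γt, (⊤ : Subgroup Γt)⁆) z)) := by
  set Kt : Subgroup Γt := ⁅commutator Γt, (⊤ : Subgroup Γt)⁆ with hKt
  set KG : Subgroup Γ := ⁅commutator Γ, (⊤ : Subgroup Γ)⁆ with hKG
  set mk : Γt →* Γt ⧸ Kt := QuotientGroup.mk' Kt with hmk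
  set zh : Γt ⧸ Kt := mk z with hzh
  -- basic mapping facts
  have hπtop : Subgroup.map π ⊤ = ⊤ := Subgroup.map_top_of_surjective π hπ
  have hcommmap : Subgroup.map π (commutator Γt) = commutator Γ := map_commutator_surj π hπ
  have hKmap : Subgroup.map π Kt = KG := by
    rw [hKt, Subgroup.map_commutator, hπtop, hcommmap]
  set f : Γt →* Γ ⧸ KG := (QuotientGroup.mk' KG).comp π with hf
  have hfs : Function.Surjective f := (QuotientGroup.mk'_surjective KG).comp hπ
  have hfker : f.ker = Kt ⊔ Subgroup.zpowers z := by
    rw [hf, ← MonoidHom.comap_ker, QuotientGroup.ker_mk', ← hKmap,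
      Subgroup.comap_map_eq, hker]
  have hKtle : Kt ≤ f.ker := by rw [hfker]; exact le_sup_left
  -- z central in the quotient
  have hzhc : zh ∈ Subgroup.center (Γt ⧸ Kt) := by
    rw [Subgroup.mem_center_iff]
    intro q
    induction q using QuotientGroup.induction_on with
    | _ g =>
      show (mk g) * (mk z) = (mk z) * (mk g)
      rw [← map_mul, ← map_mul, (Subgroup.mem_center_iff.mp hz) g]
  haveI hzpn : (Subgroup.zpowers zh).Normal :=
    normal_of_le_center (Subgroup.zpowers_le.mpr hzhc)
  have hnc : Subgroup.normalClosure {zh} = Subgroup.zpowers zh :=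
    le_antisymm (Subgroup.normalClosure_le_normal (by simpa using Subgroup.mem_zpowers zh))
      (Subgroup.zpowers_le.mpr (Subgroup.subset_normalClosure (Set.mem_singleton _)))
  have hmapker : f.ker.map mk = Subgroup.zpowers zh := by
    rw [hfker, Subgroup.map_sup, (Subgroup.map_eq_bot_iff _).mpr (by rw [hmk, QuotientGroup.ker_mk']),
      MonoidHom.map_zpowers, bot_sup_eq]
  -- the isomorphism
  haveI : (f.ker.map mk).Normal := hmapker ▸ hzpn
  have e1 : ((Γt ⧸ Kt) ⧸ (f.ker.map mk)) ≃* Γt ⧸ f.ker :=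
    QuotientGroup.quotientQuotientEquivQuotient Kt f.ker hKtle
  have e2 : Γt ⧸ f.ker ≃* Γ ⧸ KG := QuotientGroup.quotientKerEquivOfSurjective f hfs
  have iso1 : ((Γt ⧸ Kt) ⧸ Subgroup.normalClosure {zh}) ≃* Γ ⧸ KG :=
    (QuotientGroup.quotientMulEquivOfEq (hnc.trans hmapker.symm)).trans (e1.trans e2)
  refine ⟨⟨iso1⟩, ?_⟩
  -- the induced map Q
  set Q : (Γt ⧸ Kt) →* Γ ⧸ KG :=
    QuotientGroup.lift Kt f (fun g hg => MonoidHom.mem_ker.mp (hKtle hg)) with hQ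
  have hQmk : ∀ x : Γt, Q (mk x) = f x := fun _ => rfl
  have hQs : Function.Surjective Q := by
    intro b
    obtain ⟨a, rfl⟩ := hfs b
    exact ⟨mk a, rfl⟩
  have hQker : Q.ker = Subgroup.zpowers zh := by
    rw [← hmapker]
    apply le_antisymm
    · intro q hq
      induction q using QuotientGroup.induction_on with
      | _ g => exact ⟨g, MonoidHom.mem_ker.mpr hq, rfl⟩
    · rintro q ⟨y, hy, rfl⟩
      exact MonoidHom.mem_ker.mpr (MonoidHom.mem_ker.mp hy)
  -- commutator subgroups
  set Ct : Subgroup (Γt ⧸ Kt) := commutator (Γt ⧸ Kt) with hCt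
  set CG : Subgroup (Γ ⧸ KG) := commutator (Γ ⧸ KG) with hCG
  have hmktop : Subgroup.map mk ⊤ = ⊤ :=
    Subgroup.map_top_of_surjective mk (QuotientGroup.mk'_surjective Kt)
  have hCtmap : Subgroup.map mk (commutator Γt) = Ct := by
    rw [hCt]; exact map_commutator_surj mk (QuotientGroup.mk'_surjective Kt)
  have hCtbot : ⁅Ct, (⊤ : Subgroup (Γt ⧸ Kt))⁆ = ⊥ := by
    rw [← hCtmap, ← hmktop, ← Subgroup.map_commutator, ← hKt,
      Subgroup.map_eq_bot_iff _]
    rw [hmk, QuotientGroup.ker_mk']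
  have hCtcen : Ct ≤ Subgroup.center (Γt ⧸ Kt) := le_center_of_commutator_eq_bot hCtbot
  have hCGbot : ⁅CG, (⊤ : Subgroup (Γ ⧸ KG))⁆ = ⊥ := by
    have htop : Subgroup.map (QuotientGroup.mk' KG) ⊤ = ⊤ :=
      Subgroup.map_top_of_surjective _ (QuotientGroup.mk'_surjective KG)
    have hcm : Subgroup.map (QuotientGroup.mk' KG) (commutator Γ) = CG := by
      rw [hCG]; exact map_commutator_surj _ (QuotientGroup.mk'_surjective KG)
    rw [← hcm, ← htop, ← Subgroup.map_commutator, ← hKG, Subgroup.map_eq_bot_iff _,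
      QuotientGroup.ker_mk']
  have hCGcen : CG ≤ Subgroup.center (Γ ⧸ KG) := le_center_of_commutator_eq_bot hCGbot
  -- commutative group structures
  letI instCt : CommGroup ↥Ct := commGroupOfLeCenter hCtcen
  letI instCG : CommGroup ↥CG := commGroupOfLeCenter hCGcen
  -- finite generation
  haveI : Group.FG ↥Ct :=
    (Group.fg_iff_subgroup_fg Ct).mpr (commutator_fg_of_le_center _ hCtcen)
  -- the restricted surjection
  have hcommQ : Subgroup.map Q Ct = CG := by
    rw [hCt, hCG]; exact map_commutator_surj Q hQs
  set qc : ↥Ct →* ↥CG :=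
    (MulEquiv.subgroupCongr hcommQ).toMonoidHom.comp (Q.subgroupMap Ct) with hqc
  have hqcs : Function.Surjective qc :=
    (MulEquiv.subgroupCongr hcommQ).surjective.comp (Q.subgroupMap_surjective Ct)
  haveI : Group.FG ↥CG := Group.fg_of_surjective hqcs
  have hqcval : ∀ x : ↥Ct, ((qc x : ↥CG) : Γ ⧸ KG) = Q (x : Γt ⧸ Kt) := fun x => rfl
  have hqker : ∀ x : ↥Ct, x ∈ qc.ker ↔ ((x : Γt ⧸ Kt) ∈ Subgroup.zpowers zh) := by
    intro x
    rw [MonoidHom.mem_ker, ← Subtype.coe_inj, hqcval, ← hQker]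
    simp [MonoidHom.mem_ker]
  -- the inclusion of the kernel into zpowers zh
  set incl : ↥qc.ker →* ↥(Subgroup.zpowers zh) :=
    { toFun := fun x => ⟨((x : ↥Ct) : Γt ⧸ Kt), (hqker x).mp x.2⟩
      map_one' := rfl
      map_mul' := fun _ _ => rfl } with hincl
  have hCtcomm : ∀ x y : ↥Ct, x * y = y * x := fun x y =>
    Subtype.ext (((Subgroup.mem_center_iff.mp (hCtcen x.2)) y).symm)
  letI instKer : CommGroup ↥qc.ker := commGroupSubgroupOfComm hCtcomm qc.ker
  have hincl_inj : Function.Injective incl := by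
    intro a b hab
    have h0 : ((incl a : ↥(Subgroup.zpowers zh)) : Γt ⧸ Kt)
        = ((incl b : ↥(Subgroup.zpowers zh)) : Γt ⧸ Kt) := congrArg Subtype.val hab
    exact Subtype.ext (Subtype.ext h0)
  -- the element zh^m lies in the kernel
  have hzmC : z ^ m ∈ commutator Γt := by
    have h1 : (Abelianization.of (z ^ m) : Abelianization Γt) = 1 := by
      rw [map_pow, ← hzm, pow_orderOf_eq_one]
    exact (QuotientGroup.eq_one_iff _).mp h1
  have hzhmCt : zh ^ m ∈ Ct := by
    rw [← hCtmap]
    exact ⟨z ^ m, hzmC, by rw [map_pow]⟩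
  have hzker : f z = 1 := by
    have : z ∈ π.ker := by rw [hker]; exact Subgroup.mem_zpowers z
    show (QuotientGroup.mk' KG) (π z) = 1
    rw [MonoidHom.mem_ker.mp this, map_one]
  have hzhmker : (⟨zh ^ m, hzhmCt⟩ : ↥Ct) ∈ qc.ker := by
    rw [hqker]
    exact Subgroup.mem_zpowers_iff.mpr ⟨(m : ℤ), by rw [zpow_natCast]⟩
  -- case split on finiteness of the order of zh
  by_cases hfo : IsOfFinOrder zh
  · -- kernel is finite, ε = 0
    haveI hfin1 : Finite ↥(Subgroup.zpowers zh) := by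
      have := hfo.finite_zpowers
      exact this.to_subtype
    haveI hfin2 : Finite ↥qc.ker := Finite.of_injective incl hincl_inj
    have hε : arank (Additive ↥qc.ker) = 0 := mul_arank_eq_zero_of_finite _
    refine ⟨arank (Additive ↥CG), 0, by norm_num, hasFreeRank_arank _, ?_, by simp [hfo]⟩
    have := mul_arank_add qc hqcs
    rw [hε, add_zero] at this
    have h2 := hasFreeRank_arank ↥Ct
    rw [this] at h2
    simpa using h2
  · -- kernel contains an element of infinite order, ε = 1
    have hψ : ∃ ψ : ↥(Subgroup.zpowers zh) →* Multiplicative ℤ, Function.Injective ψ := by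
      have hbij : Function.Bijective
          ((zpowersHom (Γt ⧸ Kt) zh).codRestrict (Subgroup.zpowers zh)
            (fun n => ⟨n, rfl⟩)) := by
        constructor
        · intro a b hab
          have h1 : zh ^ (a.toAdd) = zh ^ (b.toAdd) := congrArg Subtype.val hab
          have := injective_zpow_iff_not_isOfFinOrder.mpr hfo h1
          exact Multiplicative.toAdd.injective this
        · rintro ⟨x, k, rfl⟩
          exact ⟨Multiplicative.ofAdd k, rfl⟩
      exact ⟨(MulEquiv.ofBijective _ hbij).symm.toMonoidHom,
        (MulEquiv.ofBijective _ hbij).symm.injective⟩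
    obtain ⟨ψ, hψinj⟩ := hψ
    set χ : ↥qc.ker →* Multiplicative ℤ := ψ.comp incl with hχ
    have hχinj : Function.Injective χ := hψinj.comp hincl_inj
    have hknz : (⟨⟨zh ^ m, hzhmCt⟩, hzhmker⟩ : ↥qc.ker) ≠ 1 := by
      intro hcon
      have h1 := Subtype.ext_iff.mp hcon
      have h2 := Subtype.ext_iff.mp h1
      exact hfo (isOfFinOrder_iff_pow_eq_one.mpr ⟨m, hm, h2⟩)
    have hε : arank (Additive ↥qc.ker) = 1 :=
      mul_arank_eq_one χ hχinj _ hknz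
    refine ⟨arank (Additive ↥CG), 1, le_refl 1, hasFreeRank_arank _, ?_, by simp [hfo]⟩
    have := mul_arank_add qc hqcs
    rw [hε] at this
    have h2 := hasFreeRank_arank ↥Ct
    rw [this] at h2
    simpa using h2


-- #print axioms rank_jump_of_central_extension
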